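/- Let S ⊆ Z^n be a semigroup, G(S) the group it generates, L(S) the real span of S, and Con(S) the closed convex cone generated by S. Let C′ ⊆ Con(S) be a closed strongly convex cone which intersects the boundary of Con(S) (in the topology of L(S)) only at the origin. Then there exists a constant N > 0 such that every point of G(S) lying in C′ whose Euclidean norm exceeds N belongs to S. -/

import Mathlib

open Filter Topology

/-- The smallest closed convex cone (with apex at the origin) containing a set `T`:
the closure of the set of all nonnegative linear combinations of elements of `T`. -/
def coneGen {V : Type*} [AddCommGroup V] [Module ℝ V] [TopologicalSpace V]
    (T : Set V) : Set V :=
  closure {x | ∃ (s : Finset V) (c : V → ℝ),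
    (s : Set V) ⊆ T ∧ (∀ v ∈ s, 0 ≤ c v) ∧ x = ∑ v ∈ s, c v • v}

/-- The coercion of an integral point of `ℤ^n` into Euclidean space `ℝ^n`. -/
def intCastEuc {n : ℕ} (x : Fin n → ℤ) : EuclideanSpace ℝ (Fin n) := WithLp.toLp 2 (fun i => (x i : ℝ))

namespace Stmt1Aux
abbrev Euc (n : ℕ) := EuclideanSpace ℝ (Fin n)
variable {n : ℕ}

lemma ice_add (a b : Fin n → ℤ) : intCastEuc (a + b) = intCastEuc a + intCastEuc b := by
  ext i; simp [intCastEuc]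

lemma ice_zero : intCastEuc (0 : Fin n → ℤ) = 0 := by
  ext i; simp [intCastEuc]

lemma ice_neg (a : Fin n → ℤ) : intCastEuc (-a) = -intCastEuc a := by
  ext i; simp [intCastEuc]

lemma ice_sub (a b : Fin n → ℤ) : intCastEuc (a - b) = intCastEuc a - intCastEuc b := by
  ext i; simp [intCastEuc]

lemma ice_nsmul (k : ℕ) (a : Fin n → ℤ) : intCastEuc (k • a) = (k : ℝ) • intCastEuc a := by
  ext i; simp [intCastEuc]

lemma ice_inj : Function.Injective (intCastEuc (n := n)) := by
  intro a b h
  funext i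
  have := congrArg (· i) h
  simpa [intCastEuc] using this

lemma ice_coord_le (g : Fin n → ℤ) (i : Fin n) : |(g i : ℝ)| ≤ ‖intCastEuc g‖ := by
  have h := EuclideanSpace.norm_eq (intCastEuc g)
  rw [h]
  have h1 : |(g i : ℝ)| = Real.sqrt (|(g i : ℝ)| ^ 2) := by
    rw [Real.sqrt_sq_eq_abs, abs_abs]
  rw [h1]
  apply Real.sqrt_le_sqrt
  refine Finset.single_le_sum (f := fun j => ‖intCastEuc g j‖ ^ 2) (fun j _ => by positivity) (Finset.mem_univ i) |>.trans_eq' ?_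
  simp [intCastEuc]


/-- The pre-closure cone of nonnegative combinations. -/
def Pcone (T : Set (Euc n)) : Set (Euc n) :=
  {x | ∃ (s : Finset (Euc n)) (c : Euc n → ℝ),
    (s : Set (Euc n)) ⊆ T ∧ (∀ v ∈ s, 0 ≤ c v) ∧ x = ∑ v ∈ s, c v • v}

lemma coneGen_eq_closure (T : Set (Euc n)) : coneGen T = closure (Pcone T) := rfl

lemma Pcone_subset_span (T : Set (Euc n)) : Pcone T ⊆ (Submodule.span ℝ T : Set (Euc n)) := by
  rintro x ⟨s, c, hsub, hc, rfl⟩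
  exact Submodule.sum_mem _ fun v hv =>
    Submodule.smul_mem _ _ (Submodule.subset_span (hsub hv))

lemma mem_Pcone_of_mem {T : Set (Euc n)} {v : Euc n} (hv : v ∈ T) : v ∈ Pcone T := by
  refine ⟨{v}, fun _ => 1, by simpa using hv, fun _ _ => zero_le_one, by simp⟩

/-- Flatten a `Pcone` member into an indexed family with preimages in `S`. -/
lemma Pcone_flat {S : Set (Fin n → ℤ)} {x : Euc n} (hx : x ∈ Pcone (intCastEuc '' S)) :
    ∃ (m : ℕ) (t : Fin m → (Fin n → ℤ)) (c : Fin m → ℝ),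
      (∀ i, t i ∈ S) ∧ (∀ i, 0 ≤ c i) ∧ x = ∑ i, c i • intCastEuc (t i) := by
  obtain ⟨s, c, hsub, hc, rfl⟩ := hx
  have hchoice : ∀ v : {v // v ∈ s}, ∃ g, g ∈ S ∧ intCastEuc g = (v : Euc n) := by
    rintro ⟨v, hv⟩
    obtain ⟨g, hg, hgv⟩ := hsub hv
    exact ⟨g, hg, hgv⟩
  choose t ht hteq using hchoice
  refine ⟨s.card, fun i => t (s.equivFin.symm i), fun i => c ((s.equivFin.symm i : {v // v ∈ s}) : Euc n),
    fun i => ht _, fun i => hc _ (s.equivFin.symm i).2, ?_⟩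
  rw [← Finset.sum_coe_sort s (fun v => c v • v)]
  refine Fintype.sum_equiv s.equivFin _ _ fun v => ?_
  simp only [Equiv.symm_apply_apply, hteq]

end Stmt1Aux

namespace Stmt1Aux
variable {n : ℕ}

lemma coneGen_subset_span {S : Set (Fin n → ℤ)} :
    coneGen (intCastEuc '' S) ⊆ (Submodule.span ℝ (intCastEuc '' S) : Set (Euc n)) := by
  rw [coneGen_eq_closure]
  have : IsClosed (Submodule.span ℝ (intCastEuc '' S) : Set (Euc n)) :=
    (Submodule.span ℝ (intCastEuc '' S)).closed_of_finiteDimensional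
  exact closure_minimal (Pcone_subset_span _) this

lemma affineSpan_coneGen {S : Set (Fin n → ℤ)} :
    (affineSpan ℝ (coneGen (intCastEuc '' S)) : Set (Euc n)) =
      (Submodule.span ℝ (intCastEuc '' S) : Set (Euc n)) := by
  set K := coneGen (intCastEuc '' S)
  set L := Submodule.span ℝ (intCastEuc '' S)
  have h0K : (0 : Euc n) ∈ K :=
    subset_closure ⟨∅, fun _ => 0, by simp, by simp, by simp⟩
  apply Set.Subset.antisymm
  · -- affineSpan K ⊆ L, since K ⊆ L and L is an affine subspace containing 0
    intro x hx
    have : affineSpan ℝ K ≤ L.toAffineSubspace := by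
      apply affineSpan_le.2
      exact coneGen_subset_span
    exact this hx
  · -- L ⊆ affineSpan K
    intro x hx
    have hVK : intCastEuc '' S ⊆ K :=
      fun v hv => subset_closure (mem_Pcone_of_mem hv)
    have h0 : (0 : Euc n) ∈ affineSpan ℝ K := subset_affineSpan ℝ K h0K
    -- x ∈ span V means x ∈ vectorSpan K ⊆ direction, then x = x - 0 +ᵥ 0
    have hdir : Submodule.span ℝ (intCastEuc '' S) ≤ (affineSpan ℝ K).direction := by
      rw [Submodule.span_le]
      intro v hv
      have : v - 0 ∈ (affineSpan ℝ K).direction :=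
        AffineSubspace.vsub_mem_direction (subset_affineSpan ℝ K (hVK hv)) h0
      simpa using this
    have : x - 0 ∈ (affineSpan ℝ K).direction := by simpa using hdir hx
    have := AffineSubspace.vadd_mem_of_mem_direction this h0
    simpa using this

lemma ball_of_not_frontier {K : Set (Euc n)} (hK : IsClosed K) {x : Euc n}
    (hxK : x ∈ K) (hx : x ∉ intrinsicFrontier ℝ K) :
    ∃ ε > 0, ∀ y ∈ (affineSpan ℝ K : Set (Euc n)), dist y x < ε → y ∈ K := by
  have hxA : x ∈ affineSpan ℝ K := subset_affineSpan ℝ K hxK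
  set A := affineSpan ℝ K
  set preK : Set A := ((↑) : A → Euc n) ⁻¹' K
  have hpre_closed : IsClosed preK := hK.preimage continuous_subtype_val
  have hxpre : (⟨x, hxA⟩ : A) ∈ preK := hxK
  have hint : (⟨x, hxA⟩ : A) ∈ interior preK := by
    by_contra hni
    apply hx
    refine ⟨⟨x, hxA⟩, ?_, rfl⟩
    rw [frontier, hpre_closed.closure_eq]
    exact ⟨hxpre, hni⟩
  rw [mem_interior_iff_mem_nhds, Metric.mem_nhds_iff] at hint
  obtain ⟨ε, hε, hball⟩ := hint
  refine ⟨ε, hε, fun y hy hdy => ?_⟩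
  have : (⟨y, hy⟩ : A) ∈ Metric.ball (⟨x, hxA⟩ : A) ε := by
    rw [Metric.mem_ball, Subtype.dist_eq]
    exact hdy
  exact hball this

end Stmt1Aux

namespace Stmt1Aux
variable {n : ℕ}


/-- sign helper -/
def sgn (s : Bool) : ℝ := if s then 1 else -1

lemma abs_sgn (s : Bool) : |sgn s| = 1 := by cases s <;> simp [sgn]

set_option maxHeartbeats 1000000

/-- The key local representation lemma: if a ball around `x` inside `L` is contained in the
closure of `P`, then all points of `L` in a smaller ball around `x` are finite nonnegative
combinations of finitely many FIXED elements of `P`. -/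
lemma local_rep (L : Submodule ℝ (Euc n)) (P : Set (Euc n)) (hPL : P ⊆ (L : Set (Euc n)))
    (x : Euc n) (hxL : x ∈ L) (hx0 : x ≠ 0) {ε : ℝ} (hε : 0 < ε)
    (hball : ∀ y ∈ (L : Set (Euc n)), dist y x < ε → y ∈ closure P) :
    ∃ r > 0, ∃ (ι : Type) (_ : Fintype ι) (p : ι → Euc n), (∀ i, p i ∈ P) ∧
      ∀ y ∈ (L : Set (Euc n)), dist y x < r →
        ∃ a : ι → ℝ, (∀ i, 0 ≤ a i) ∧ y = ∑ i, a i • p i := by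
  classical
  -- dimension
  have hLnt : Nontrivial ↥L := ⟨⟨x, hxL⟩, 0, by simp [hx0]⟩
  set d := Module.finrank ℝ ↥L with hd_def
  have hd : 0 < d := Module.finrank_pos
  have hdR : (0 : ℝ) < d := by exact_mod_cast hd
  set b := stdOrthonormalBasis ℝ ↥L with hb_def
  -- coordinates
  set co : Fin d → Euc n → ℝ := fun j z => inner ℝ ((b j : Euc n)) z with hco_def
  have hbnorm : ∀ j, ‖(b j : Euc n)‖ = 1 := by
    intro j
    rw [← Submodule.coe_norm]
    exact b.orthonormal.1 j
  have hco_le : ∀ j z, |co j z| ≤ ‖z‖ := by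
    intro j z
    have := abs_real_inner_le_norm ((b j : Euc n)) z
    rwa [hbnorm, one_mul] at this
  have hco_lin : ∀ j (z z' : Euc n), co j (z - z') = co j z - co j z' := by
    intro j z z'; exact inner_sub_right _ _ _
  have hexpand : ∀ v, v ∈ L → ∑ j, co j v • (b j : Euc n) = v := by
    intro v hv
    have h := b.sum_repr ⟨v, hv⟩
    have h2 := congrArg (Subtype.val) h
    rw [Submodule.coe_sum] at h2
    simp only [SetLike.val_smul, OrthonormalBasis.repr_apply_apply, Submodule.coe_inner] at h2
    exact h2
  -- constants
  set ε' := ε / 2 with hε'_def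
  have hε' : 0 < ε' := by positivity
  set δ := ε' / (8 * d) with hδ_def
  have hδ : 0 < δ := by positivity
  -- points q and approximations p in P
  set q : Fin d × Bool → Euc n := fun js => x + (ε' * sgn js.2) • (b js.1 : Euc n) with hq_def
  have hqL : ∀ js, q js ∈ L := fun js => add_mem hxL (Submodule.smul_mem _ _ (b js.1).2)
  have hq_dist : ∀ js, dist (q js) x = ε' := by
    intro js
    rw [dist_eq_norm]
    simp only [hq_def, add_sub_cancel_left]
    rw [norm_smul, hbnorm, mul_one, Real.norm_eq_abs, abs_mul, abs_sgn, mul_one,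
      abs_of_pos hε']
  have hqP : ∀ js, q js ∈ closure P := by
    intro js
    exact hball _ (hqL js) (by rw [hq_dist]; linarith)
  have hp_ex : ∀ js, ∃ w ∈ P, dist (q js) w < δ := fun js =>
    Metric.mem_closure_iff.1 (hqP js) δ hδ
  choose p hpP hpq using hp_ex
  have hpq' : ∀ js, ‖p js - q js‖ < δ := by
    intro js
    rw [← dist_eq_norm, dist_comm]
    exact hpq js
  -- coefficients
  set a : Fin d × Bool → Euc n → ℝ :=
    fun js z => 1 / (2 * d) + sgn js.2 * co js.1 (z - x) / (2 * ε') with ha_def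
  -- key identity over q
  have key : ∀ z, z ∈ L → ∑ js : Fin d × Bool, a js z • q js = z := by
    intro z hz
    have hz' : z - x ∈ L := sub_mem hz hxL
    have expand := hexpand (z - x) hz'
    rw [Fintype.sum_prod_type]
    have hrow : ∀ j : Fin d, ∑ s : Bool, a (j, s) z • q (j, s)
        = (1 / (d : ℝ)) • x + co j (z - x) • (b j : Euc n) := by
      intro j
      rw [Fintype.sum_bool]
      simp only [ha_def, hq_def, sgn, if_true, if_false, Bool.false_eq_true]
      match_scalars <;> field_simp <;> ring
    rw [Finset.sum_congr rfl (fun j _ => hrow j), Finset.sum_add_distrib, expand]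
    have : ∑ _j : Fin d, (1 / (d : ℝ)) • x = x := by
      rw [Finset.sum_const, Finset.card_univ, Fintype.card_fin,
        ← Nat.cast_smul_eq_nsmul ℝ, smul_smul, mul_one_div, div_self hdR.ne', one_smul]
    rw [this]
    abel
  -- the defect map D
  set D : Euc n → Euc n := fun z => ∑ js : Fin d × Bool, a js z • (p js - q js) with hD_def
  have hpsum : ∀ z, z ∈ L → ∑ js : Fin d × Bool, a js z • p js = z + D z := by
    intro z hz
    simp only [hD_def, smul_sub, Finset.sum_sub_distrib]
    rw [key z hz]
    abel
  have hDL : ∀ z, D z ∈ L := by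
    intro z
    exact Submodule.sum_mem _ fun js _ =>
      Submodule.smul_mem _ _ (sub_mem (hPL (hpP js)) (hqL js))
  -- coefficient difference bound
  have ha_diff : ∀ (js : Fin d × Bool) (z z' : Euc n),
      a js z - a js z' = sgn js.2 * co js.1 (z - z') / (2 * ε') := by
    intro js z z'
    have : co js.1 (z - x) - co js.1 (z' - x) = co js.1 (z - z') := by
      rw [← hco_lin]
      congr 1
      abel
    simp only [ha_def]
    rw [← this]
    ring
  have ha_abs : ∀ (js : Fin d × Bool) (z z' : Euc n),
      |a js z - a js z'| ≤ ‖z - z'‖ / (2 * ε') := by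
    intro js z z'
    rw [ha_diff]
    rw [abs_div, abs_mul, abs_sgn, one_mul, abs_of_pos (by positivity : (0:ℝ) < 2 * ε')]
    gcongr
    exact hco_le _ _
  -- Lipschitz bound for D
  have hcard : (Finset.univ : Finset (Fin d × Bool)).card = d * 2 := by
    simp [Finset.card_univ]
  have hD_lip : ∀ z z', ‖D z - D z'‖ ≤ (1/2) * ‖z - z'‖ := by
    intro z z'
    have h1 : D z - D z' = ∑ js : Fin d × Bool, (a js z - a js z') • (p js - q js) := by
      simp only [hD_def, sub_smul, Finset.sum_sub_distrib]
    rw [h1]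
    have h2 : ∀ js : Fin d × Bool, ‖(a js z - a js z') • (p js - q js)‖
        ≤ ‖z - z'‖ / (2 * ε') * δ := by
      intro js
      rw [norm_smul, Real.norm_eq_abs]
      exact mul_le_mul (ha_abs js z z') (hpq' js).le (norm_nonneg _) (by positivity)
    calc ‖∑ js : Fin d × Bool, (a js z - a js z') • (p js - q js)‖
        ≤ ∑ js : Fin d × Bool, ‖(a js z - a js z') • (p js - q js)‖ :=
          norm_sum_le _ _
      _ ≤ (Finset.univ : Finset (Fin d × Bool)).card • (‖z - z'‖ / (2 * ε') * δ) :=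
          Finset.sum_le_card_nsmul _ _ _ (fun js _ => h2 js)
      _ = (d * 2 : ℕ) * (‖z - z'‖ / (2 * ε') * δ) := by rw [hcard, nsmul_eq_mul]
      _ ≤ (1/2) * ‖z - z'‖ := by
          have hδval : δ = ε' / (8 * d) := hδ_def
          rw [hδval]
          have heq : ((d * 2 : ℕ) : ℝ) * (‖z - z'‖ / (2 * ε') * (ε' / (8 * (d:ℝ)))) = ‖z - z'‖ / 8 := by
            push_cast
            field_simp
          rw [heq]
          have := norm_nonneg (z - z')
          linarith
  -- bound for D x
  have hD_x : ‖D x‖ ≤ δ := by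
    have h2 : ∀ js : Fin d × Bool, ‖a js x • (p js - q js)‖ ≤ 1 / (2 * d) * δ := by
      intro js
      rw [norm_smul, Real.norm_eq_abs]
      have hax : a js x = 1 / (2 * d) := by
        simp only [ha_def, sub_self]
        have : co js.1 (0 : Euc n) = 0 := inner_zero_right _
        rw [this]
        ring
      rw [hax, abs_of_pos (by positivity)]
      exact mul_le_mul_of_nonneg_left (hpq' js).le (by positivity)
    calc ‖D x‖ ≤ ∑ js : Fin d × Bool, ‖a js x • (p js - q js)‖ := norm_sum_le _ _
      _ ≤ (Finset.univ : Finset (Fin d × Bool)).card • (1 / (2 * d) * δ) :=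
          Finset.sum_le_card_nsmul _ _ _ (fun js _ => h2 js)
      _ = (d * 2 : ℕ) * (1 / (2 * d) * δ) := by rw [hcard, nsmul_eq_mul]
      _ = δ := by
          push_cast
          field_simp
  -- conclusion via the Banach fixed point theorem
  refine ⟨δ, hδ, Fin d × Bool, inferInstance, p, hpP, ?_⟩
  intro y hyL hyx
  set Φ : Euc n → Euc n := fun z => y - D z with hΦ_def
  have hlips : LipschitzWith (1/2 : NNReal) Φ := by
    apply LipschitzWith.of_dist_le_mul
    intro z z'
    have : dist (Φ z) (Φ z') = ‖D z' - D z‖ := by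
      rw [dist_eq_norm]
      simp only [hΦ_def]
      congr 1
      abel
    rw [this, dist_eq_norm]
    have h := hD_lip z' z
    rw [norm_sub_rev (z' : Euc n) z] at h
    calc ‖D z' - D z‖ ≤ 1/2 * ‖z - z'‖ := h
      _ = ((1/2 : NNReal) : ℝ) * ‖z - z'‖ := by norm_num
  have hcontr : ContractingWith (1/2 : NNReal) Φ := ⟨by rw [← NNReal.coe_lt_coe]; norm_num, hlips⟩
  set w := hcontr.fixedPoint Φ with hw_def
  have hfix : Φ w = w := hcontr.fixedPoint_isFixedPt
  have hDw : D w = y - w := by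
    have : y - D w = w := hfix
    linear_combination (norm := abel) -this
  have hwL : w ∈ L := by
    rw [← hfix]
    exact sub_mem hyL (hDL w)
  have hdxw : dist x w ≤ 4 * δ := by
    have h1 := hcontr.dist_fixedPoint_le x
    have h2 : dist x (Φ x) ≤ 2 * δ := by
      rw [dist_eq_norm]
      have : x - Φ x = (x - y) + D x := by simp only [hΦ_def]; abel
      rw [this]
      calc ‖(x - y) + D x‖ ≤ ‖x - y‖ + ‖D x‖ := norm_add_le _ _
        _ ≤ 2 * δ := by
            have : ‖x - y‖ < δ := by rwa [← dist_eq_norm, dist_comm]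
            linarith [hD_x]
    have h3 : (1 - ((1/2 : NNReal) : ℝ)) = 1/2 := by norm_num
    rw [h3] at h1
    calc dist x w ≤ dist x (Φ x) / (1/2) := h1
      _ = 2 * dist x (Φ x) := by ring
      _ ≤ 4 * δ := by linarith
  have hwx_norm : ‖w - x‖ ≤ 4 * δ := by
    rw [← dist_eq_norm, dist_comm]
    exact hdxw
  -- nonnegativity of coefficients
  have ha_nonneg : ∀ js : Fin d × Bool, 0 ≤ a js w := by
    intro js
    have h1 : |sgn js.2 * co js.1 (w - x)| ≤ 4 * δ := by
      rw [abs_mul, abs_sgn, one_mul]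
      exact (hco_le _ _).trans hwx_norm
    have h2 : -(4 * δ) ≤ sgn js.2 * co js.1 (w - x) := neg_le_of_abs_le h1
    have h3 : (4 * δ) / (2 * ε') ≤ 1 / (4 * d) := by
      rw [hδ_def]
      rw [show 4 * (ε' / (8 * (d:ℝ))) / (2 * ε') = 1 / (4 * d) by field_simp; ring]
    have h4 : sgn js.2 * co js.1 (w - x) / (2 * ε') ≥ -(1 / (4 * d)) := by
      rw [ge_iff_le, neg_le, ← neg_div]
      calc -(sgn js.2 * co js.1 (w - x)) / (2 * ε') ≤ (4 * δ) / (2 * ε') := by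
            apply div_le_div_of_nonneg_right ((neg_le_abs _).trans h1) (by positivity)
        _ ≤ 1 / (4 * d) := h3
    simp only [ha_def]
    have h5 : 1 / (4 * (d:ℝ)) ≤ 1 / (2 * d) := by
      apply one_div_le_one_div_of_le (by positivity)
      linarith
    linarith
  refine ⟨fun js => a js w, ha_nonneg, ?_⟩
  rw [hpsum w hwL, hDw]
  abel

end Stmt1Aux

namespace Stmt1Aux
variable {n : ℕ}

/-- A sum of naturally-many elements of a subsemigroup `S` with at least one summand is in `S`. -/
lemma nsmul_mem_S {S : Set (Fin n → ℤ)} (hS : ∀ x ∈ S, ∀ y ∈ S, x + y ∈ S)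
    {s : Fin n → ℤ} (hs : s ∈ S) : ∀ k : ℕ, 1 ≤ k → k • s ∈ S := by
  intro k hk
  induction k with
  | zero => omega
  | succ m ih =>
    rcases Nat.eq_or_lt_of_le hk with h | h
    · simpa [← h] using hs
    · have hm : 1 ≤ m := by omega
      have := hS _ (ih hm) _ hs
      rwa [succ_nsmul]

lemma sum_mem_S {S : Set (Fin n → ℤ)} (hS : ∀ x ∈ S, ∀ y ∈ S, x + y ∈ S)
    {ι : Type*} (t : Finset ι) (f : ι → Fin n → ℤ) (k : ι → ℕ)
    (hf : ∀ i ∈ t, f i ∈ S) (hex : ∃ i ∈ t, 1 ≤ k i) :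
    ∑ i ∈ t, k i • f i ∈ S := by
  classical
  induction t using Finset.induction with
  | empty => simp at hex
  | insert _ _ hnotmem ih =>
    rename_i a t'
    rw [Finset.sum_insert hnotmem]
    by_cases hka : 1 ≤ k a
    · have haS : k a • f a ∈ S := nsmul_mem_S hS (hf a (Finset.mem_insert_self a t')) _ hka
      by_cases hex' : ∃ i ∈ t', 1 ≤ k i
      · exact hS _ haS _ (ih (fun i hi => hf i (Finset.mem_insert_of_mem hi)) hex')
      · push_neg at hex'
        have : ∑ i ∈ t', k i • f i = 0 := by
          apply Finset.sum_eq_zero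
          intro i hi
          have : k i = 0 := by have := hex' i hi; omega
          simp [this]
        rw [this, add_zero]
        exact haS
    · have hka0 : k a = 0 := by omega
      rw [hka0, zero_smul, zero_add]
      apply ih (fun i hi => hf i (Finset.mem_insert_of_mem hi))
      obtain ⟨i, hi, hki⟩ := hex
      rcases Finset.mem_insert.1 hi with rfl | hi'
      · omega
      · exact ⟨i, hi', hki⟩

/-- A finite subset of `S` that generates the same `ℤ`-span as `S`. -/
lemma exists_finite_gen (S : Set (Fin n → ℤ)) :
    ∃ T : Finset (Fin n → ℤ), (T : Set (Fin n → ℤ)) ⊆ S ∧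
      Submodule.span ℤ (T : Set (Fin n → ℤ)) = Submodule.span ℤ S := by
  classical
  have hfg : (Submodule.span ℤ S).FG := IsNoetherian.noetherian _
  obtain ⟨T0, hT0⟩ := hfg
  -- each generator is a finite ℤ-combination of elements of S
  have hmem : ∀ t : Fin n → ℤ, t ∈ (T0 : Set (Fin n → ℤ)) → t ∈ Submodule.span ℤ S := by
    intro t ht
    rw [← hT0]
    exact Submodule.subset_span ht
  have hchoice : ∀ t : {t // t ∈ T0}, ∃ c : (Fin n → ℤ) →₀ ℤ,
      ↑c.support ⊆ S ∧ (c.sum fun mi r => r • mi) = (t : Fin n → ℤ) := by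
    intro t
    exact Submodule.mem_span_set.1 (hmem t t.2)
  choose c hcsub hcsum using hchoice
  refine ⟨Finset.univ.biUnion (fun t : {t // t ∈ T0} => (c t).support), ?_, ?_⟩
  · intro v hv
    simp only [Finset.coe_biUnion, Set.mem_iUnion, Finset.mem_coe] at hv
    obtain ⟨t, _, hvt⟩ := hv
    exact hcsub t hvt
  · apply le_antisymm
    · rw [Submodule.span_le]
      intro v hv
      simp only [Finset.coe_biUnion, Set.mem_iUnion, Finset.mem_coe] at hv
      obtain ⟨t, _, hvt⟩ := hv
      exact Submodule.subset_span (hcsub t hvt)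
    · rw [← hT0, Submodule.span_le]
      intro t ht
      have hcs : ((c ⟨t, ht⟩).sum fun mi r => r • mi) = t := hcsum ⟨t, ht⟩
      rw [SetLike.mem_coe, ← hcs]
      apply Submodule.sum_mem
      intro v hv
      apply Submodule.smul_mem
      apply Submodule.subset_span
      simp only [Finset.coe_biUnion, Set.mem_iUnion, Finset.mem_coe]
      exact ⟨⟨t, ht⟩, Finset.mem_univ _, hv⟩

/-- Bounded sets of lattice points are finite. -/
lemma finite_bounded_lattice (B : ℝ) :
    {h : Fin n → ℤ | ‖intCastEuc h‖ ≤ B}.Finite := by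
  classical
  apply Set.Finite.subset (Set.Finite.pi (fun i : Fin n => Set.finite_Icc (-⌈B⌉) ⌈B⌉))
  intro h hh
  simp only [Set.mem_pi, Set.mem_univ, forall_true_left, Set.mem_Icc]
  intro i
  have h1 : |(h i : ℝ)| ≤ B := (ice_coord_le h i).trans hh
  have h2 : |(h i : ℝ)| ≤ (⌈B⌉ : ℝ) := h1.trans (Int.le_ceil B)
  rw [← Int.cast_abs] at h2
  have : |h i| ≤ ⌈B⌉ := by exact_mod_cast h2
  exact abs_le.mp this

end Stmt1Aux

namespace Stmt1Aux
variable {n : ℕ}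

lemma ice_sum {ι : Type*} (t : Finset ι) (f : ι → Fin n → ℤ) :
    intCastEuc (∑ i ∈ t, f i) = ∑ i ∈ t, intCastEuc (f i) := by
  classical
  induction t using Finset.induction with
  | empty => simpa using ice_zero
  | insert _ _ hni ih =>
    rename_i a t'
    rw [Finset.sum_insert hni, Finset.sum_insert hni, ice_add, ih]

lemma ice_mem_span {S : Set (Fin n → ℤ)} {g : Fin n → ℤ} (hg : g ∈ AddSubgroup.closure S) :
    intCastEuc g ∈ Submodule.span ℝ (intCastEuc '' S) := by
  induction hg using AddSubgroup.closure_induction with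
  | mem s hs => exact Submodule.subset_span ⟨s, hs, rfl⟩
  | zero => rw [ice_zero]; exact Submodule.zero_mem _
  | add a b _ _ iha ihb => rw [ice_add]; exact Submodule.add_mem _ iha ihb
  | neg a _ iha => rw [ice_neg]; exact Submodule.neg_mem _ iha

end Stmt1Aux


open Stmt1Aux in
set_option maxHeartbeats 2000000 in
/-- approximation theorem: let `S ⊆ ℤ^n` be a semigroup, `G(S)` the group it
generates and `Con(S)` the closed convex cone it generates.  If `C'` is a closed strongly
convex cone contained in `Con(S)` meeting the boundary of `Con(S)` (in the topology of the
span `L(S)`, i.e. the intrinsic frontier) only at the origin, then there is `N > 0` such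
that every point of `G(S)` lying in `C'` of Euclidean norm larger than `N` belongs to `S`. -/
theorem stmt1 {n : ℕ} (S : Set (Fin n → ℤ))
    (hS : ∀ x ∈ S, ∀ y ∈ S, x + y ∈ S)
    (C' : Set (EuclideanSpace ℝ (Fin n)))
    (hC'closed : IsClosed C') (hC'convex : Convex ℝ C')
    (hC'cone : ∀ x ∈ C', ∀ c : ℝ, 0 ≤ c → c • x ∈ C')
    (hC'line : ∀ x ∈ C', -x ∈ C' → x = 0)
    (hsub : C' ⊆ coneGen (intCastEuc '' S))
    (hbd : ∀ x ∈ C' ∩ intrinsicFrontier ℝ (coneGen (intCastEuc '' S)), x = 0) :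
    ∃ N : ℝ, 0 < N ∧ ∀ g : Fin n → ℤ,
      g ∈ AddSubgroup.closure S → intCastEuc g ∈ C' → N < ‖intCastEuc g‖ → g ∈ S := by
  classical
  set K := coneGen (intCastEuc '' S) with hK_def
  set L := Submodule.span ℝ (intCastEuc '' S) with hL_def
  set Cs := C' ∩ Metric.sphere (0 : Euc n) 1 with hCs_def
  -- trivial case
  rcases Set.eq_empty_or_nonempty Cs with hCse | hCsne
  · refine ⟨1, one_pos, fun g hg hgC hgN => ?_⟩
    exfalso
    have hgnorm : (0:ℝ) < ‖intCastEuc g‖ := lt_trans one_pos hgN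
    have hmem : ‖intCastEuc g‖⁻¹ • intCastEuc g ∈ Cs := by
      refine ⟨hC'cone _ hgC _ (by positivity), ?_⟩
      rw [mem_sphere_zero_iff_norm, norm_smul, Real.norm_eq_abs,
        abs_of_pos (by positivity), inv_mul_cancel₀ hgnorm.ne']
    rw [hCse] at hmem
    exact hmem
  -- finite generating set
  obtain ⟨T, hTS, hTspan⟩ := exists_finite_gen S
  set vT : Euc n := ∑ e ∈ T, intCastEuc e with hvT_def
  have hvTL : vT ∈ L := Submodule.sum_mem _ fun e he =>
    Submodule.subset_span ⟨e, hTS he, rfl⟩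
  -- the local statement around each point of Cs
  have hmain : ∀ x : Euc n, ∃ (ρ η : ℝ) (m : ℕ) (tt : Fin m → (Fin n → ℤ)), x ∈ Cs →
      (0 < ρ ∧ 0 < η ∧ (∀ i, tt i ∈ S) ∧ ∀ y ∈ (L : Set (Euc n)), dist y x < ρ →
        ∃ a : Fin m → ℝ, (∀ i, 0 ≤ a i) ∧
          y = η • vT + ∑ i, a i • intCastEuc (tt i)) := by
    intro x
    by_cases hx : x ∈ Cs
    case neg => exact ⟨1, 1, 0, Fin.elim0, fun h => absurd h hx⟩
    obtain ⟨hxC, hxs⟩ := hx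
    have hx1 : ‖x‖ = 1 := mem_sphere_zero_iff_norm.1 hxs
    have hx0 : x ≠ 0 := by intro h; rw [h, norm_zero] at hx1; norm_num at hx1
    have hxK : x ∈ K := hsub hxC
    have hxnf : x ∉ intrinsicFrontier ℝ K := fun hf => hx0 (hbd x ⟨hxC, hf⟩)
    have hKclosed : IsClosed K := isClosed_closure
    obtain ⟨ε, hε, hball⟩ := ball_of_not_frontier hKclosed hxK hxnf
    rw [show (affineSpan ℝ K : Set (Euc n)) = (L : Set (Euc n)) from affineSpan_coneGen] at hball
    have hxL : x ∈ L := coneGen_subset_span hxK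
    obtain ⟨r, hr, ι, hιfin, p, hpP, hrep⟩ :=
      local_rep L (Pcone (intCastEuc '' S)) (Pcone_subset_span _) x hxL hx0 hε
        (fun y hy hd => hball y hy hd)
    -- flatten the p i into combinations of elements of S
    have hflat : ∀ i : ι, ∃ (m : ℕ) (t : Fin m → (Fin n → ℤ)) (c : Fin m → ℝ),
        (∀ j, t j ∈ S) ∧ (∀ j, 0 ≤ c j) ∧ p i = ∑ j, c j • intCastEuc (t j) :=
      fun i => Pcone_flat (hpP i)
    choose pm pt pc hptS hpc0 hpeq using hflat
    set I := (i : ι) × Fin (pm i) with hI_def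
    set eqv := Fintype.equivFin I with heqv_def
    have hvTpos : (0:ℝ) < 1 + ‖vT‖ := by positivity
    set η := r / (2 * (1 + ‖vT‖)) with hη_def
    have hηpos : 0 < η := by positivity
    refine ⟨r/2, η, Fintype.card I, fun k => pt (eqv.symm k).1 (eqv.symm k).2,
      fun _ => ⟨by positivity, hηpos, fun k => hptS _ _, ?_⟩⟩
    intro y hyL hyd
    set y' := y - η • vT with hy'_def
    have hy'L : y' ∈ L := sub_mem hyL (Submodule.smul_mem _ _ hvTL)
    have hy'd : dist y' x < r := by
      have h1 : dist y' y = η * ‖vT‖ := by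
        rw [dist_eq_norm, hy'_def]
        simp only [sub_sub_cancel_left, norm_neg]
        rw [norm_smul, Real.norm_eq_abs, abs_of_pos hηpos]
      have h2 : η * ‖vT‖ < r / 2 := by
        have : η * (1 + ‖vT‖) = r / 2 := by
          rw [hη_def]; field_simp
        nlinarith
      calc dist y' x ≤ dist y' y + dist y x := dist_triangle _ _ _
        _ < r / 2 + r / 2 := by exact add_lt_add_of_lt_of_lt (h1 ▸ h2) hyd
        _ = r := by ring
    obtain ⟨a, ha0, hay⟩ := hrep y' hy'L hy'd
    refine ⟨fun k => a (eqv.symm k).1 * pc (eqv.symm k).1 (eqv.symm k).2,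
      fun k => mul_nonneg (ha0 _) (hpc0 _ _), ?_⟩
    have hsum : ∑ i : ι, a i • p i
        = ∑ k : Fin (Fintype.card I),
            (a (eqv.symm k).1 * pc (eqv.symm k).1 (eqv.symm k).2) •
              intCastEuc (pt (eqv.symm k).1 (eqv.symm k).2) := by
      calc ∑ i : ι, a i • p i
          = ∑ i : ι, ∑ j : Fin (pm i), (a i * pc i j) • intCastEuc (pt i j) := by
            refine Finset.sum_congr rfl fun i _ => ?_
            rw [hpeq i, Finset.smul_sum]
            refine Finset.sum_congr rfl fun j _ => ?_
            rw [smul_smul]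
        _ = ∑ σ : I, (a σ.1 * pc σ.1 σ.2) • intCastEuc (pt σ.1 σ.2) := by
            rw [← Finset.univ_sigma_univ, Finset.sum_sigma]
        _ = _ := by
            refine Fintype.sum_equiv eqv _ _ fun σ => ?_
            rw [Equiv.symm_apply_apply]
    rw [← hsum, ← hay, hy'_def]
    abel
  choose ρ η m tt hloc using hmain
  -- compact cover of Cs
  have hCscompact : IsCompact Cs := (isCompact_sphere 0 1).inter_left hC'closed
  obtain ⟨cov, hcovCs, hcover⟩ := hCscompact.elim_nhds_subcover
    (fun x => Metric.ball x (ρ x))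
    (fun x hx => Metric.ball_mem_nhds x (hloc x hx).1)
  have hcovne : cov.Nonempty := by
    obtain ⟨y0, hy0⟩ := hCsne
    obtain ⟨x, hx, _⟩ := Set.mem_iUnion₂.1 (hcover hy0)
    exact ⟨x, hx⟩
  -- nonemptiness of T
  have hTne : T.Nonempty := by
    rcases Finset.eq_empty_or_nonempty T with rfl | h
    · exfalso
      obtain ⟨y0, hy0⟩ := hCsne
      have hy01 : ‖y0‖ = 1 := mem_sphere_zero_iff_norm.1 hy0.2
      have hy0L : y0 ∈ L := coneGen_subset_span (hsub hy0.1)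
      have hSsub : S ⊆ {0} := by
        intro s hs
        have : s ∈ Submodule.span ℤ S := Submodule.subset_span hs
        rw [← hTspan] at this
        simpa using this
      have : L = ⊥ := by
        rw [hL_def, Submodule.span_eq_bot]
        rintro v ⟨s, hs, rfl⟩
        rw [hSsub hs, ice_zero]
      rw [this] at hy0L
      simp only [Submodule.mem_bot] at hy0L
      rw [hy0L, norm_zero] at hy01
      norm_num at hy01
    · exact h
  -- constants
  set ηmin := cov.inf' hcovne η with hηmin_def
  have hηminpos : 0 < ηmin := by
    rw [hηmin_def, Finset.lt_inf'_iff]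
    exact fun x hx => (hloc x (hcovCs x hx)).2.1
  set BT : ℝ := ∑ e ∈ T, ‖intCastEuc e‖ with hBT_def
  set B : ℝ := BT + cov.sup' hcovne (fun x => ∑ i : Fin (m x), ‖intCastEuc (tt x i)‖)
    with hB_def
  -- residues
  set Rset := {h : Fin n → ℤ | h ∈ AddSubgroup.closure S ∧ ‖intCastEuc h‖ ≤ B} with hRset_def
  have hRfin : Rset.Finite := (finite_bounded_lattice B).subset fun h hh => hh.2
  set RF := hRfin.toFinset with hRF_def
  have hrep : ∀ h ∈ RF, ∃ f : (Fin n → ℤ) → ℤ, ∑ e ∈ T, f e • e = h := by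
    intro h hh
    rw [hRF_def, Set.Finite.mem_toFinset] at hh
    have h1 : h ∈ Submodule.span ℤ S := by
      have := hh.1
      rw [← Submodule.span_int_eq_addSubgroupClosure S] at this
      exact this
    rw [← hTspan] at h1
    exact (Submodule.mem_span_finset.1 h1).imp fun f hf => hf.2
  choose! cf hcf using hrep
  set M : ℕ := RF.sup (fun h => T.sup (fun e => (cf h e).natAbs)) with hM_def
  -- the final constant
  refine ⟨(M + 2) / ηmin + 1, by positivity, ?_⟩
  intro g hgG hgC hgN
  set z := intCastEuc g with hz_def
  have hzpos : (0:ℝ) < ‖z‖ := lt_of_le_of_lt (by positivity) hgN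
  have hzL : z ∈ L := ice_mem_span hgG
  set y := ‖z‖⁻¹ • z with hy_def
  have hyCs : y ∈ Cs := by
    refine ⟨hC'cone _ hgC _ (by positivity), ?_⟩
    rw [mem_sphere_zero_iff_norm, hy_def, norm_smul, Real.norm_eq_abs,
      abs_of_pos (by positivity), inv_mul_cancel₀ hzpos.ne']
  have hyL : y ∈ L := Submodule.smul_mem _ _ hzL
  obtain ⟨x, hxcov, hyball⟩ := Set.mem_iUnion₂.1 (hcover hyCs)
  have hxCs : x ∈ Cs := hcovCs x hxcov
  obtain ⟨_, hηx, httS, hrepx⟩ := hloc x hxCs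
  obtain ⟨a, ha0, hay⟩ := hrepx y hyL (Metric.mem_ball.1 hyball)
  -- scale the representation by ‖z‖
  set Λ := η x * ‖z‖ with hΛ_def
  set μ : Fin (m x) → ℝ := fun i => ‖z‖ * a i with hμ_def
  have hzeq : z = Λ • vT + ∑ i, μ i • intCastEuc (tt x i) := by
    have h1 : z = ‖z‖ • y := by
      rw [hy_def, smul_smul, mul_inv_cancel₀ hzpos.ne', one_smul]
    have e1 : ‖z‖ • (η x • vT) = Λ • vT := by rw [smul_smul, hΛ_def, mul_comm]
    have e2 : ‖z‖ • (∑ i, a i • intCastEuc (tt x i)) = ∑ i, μ i • intCastEuc (tt x i) := by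
      rw [Finset.smul_sum]
      exact Finset.sum_congr rfl fun i _ => smul_smul _ _ _
    rw [h1, hay, smul_add, e1, e2]
  -- bounds for the coefficients
  have hημ : ηmin ≤ η x := Finset.inf'_le _ hxcov
  have hΛlb : (M:ℝ) + 2 < Λ := by
    have h1 : ηmin * ‖z‖ ≤ Λ := by
      rw [hΛ_def]
      exact mul_le_mul_of_nonneg_right hημ hzpos.le
    have h2 : ηmin * ((M + 2) / ηmin + 1) < ηmin * ‖z‖ :=
      mul_lt_mul_of_pos_left hgN hηminpos
    have h3 : ηmin * ((M + 2) / ηmin + 1) = (M + 2) + ηmin := by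
      field_simp
    nlinarith
  have hΛpos : 0 ≤ Λ := by positivity
  have hμpos : ∀ i, 0 ≤ μ i := fun i => mul_nonneg hzpos.le (ha0 i)
  set kΛ := ⌊Λ⌋₊ with hkΛ_def
  set ki : Fin (m x) → ℕ := fun i => ⌊μ i⌋₊ with hki_def
  have hkΛnat : M + 2 ≤ kΛ := by
    have h1 : Λ < kΛ + 1 := Nat.lt_floor_add_one Λ
    have h2 : ((M:ℝ)) + 1 < (kΛ : ℝ) := by linarith
    have h3 : M + 1 < kΛ := by exact_mod_cast h2
    omega
  -- the residue
  set r0 : Fin n → ℤ := g - kΛ • (∑ e ∈ T, e) - ∑ i, ki i • tt x i with hr0_def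
  have hr0G : r0 ∈ AddSubgroup.closure S := by
    apply AddSubgroup.sub_mem
    apply AddSubgroup.sub_mem
    · exact hgG
    · exact AddSubgroup.nsmul_mem _ (AddSubgroup.sum_mem _ fun e he =>
        AddSubgroup.subset_closure (hTS he)) _
    · exact AddSubgroup.sum_mem _ fun i _ =>
        AddSubgroup.nsmul_mem _ (AddSubgroup.subset_closure (httS i)) _
  have hicer : intCastEuc r0 = (Λ - kΛ) • vT + ∑ i, (μ i - ki i) • intCastEuc (tt x i) := by
    rw [hr0_def, ice_sub, ice_sub, ice_nsmul, ice_sum, ice_sum]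
    have h1 : ∑ i, intCastEuc (ki i • tt x i) = ∑ i, (ki i : ℝ) • intCastEuc (tt x i) :=
      Finset.sum_congr rfl fun i _ => ice_nsmul _ _
    rw [h1, ← hz_def, hzeq, ← hvT_def]
    simp only [sub_smul]
    rw [Finset.sum_sub_distrib]
    abel
  have hr0norm : ‖intCastEuc r0‖ ≤ B := by
    rw [hicer]
    have hfr1 : |Λ - (kΛ:ℝ)| ≤ 1 := by
      rw [abs_le]
      constructor
      · have := Nat.floor_le hΛpos; rw [← hkΛ_def] at this; linarith
      · have := Nat.lt_floor_add_one Λ; rw [← hkΛ_def] at this; linarith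
    have hfr2 : ∀ i, |μ i - (ki i:ℝ)| ≤ 1 := by
      intro i
      rw [abs_le]
      constructor
      · have := Nat.floor_le (hμpos i); linarith
      · have := Nat.lt_floor_add_one (μ i); linarith
    have h1 : ‖(Λ - kΛ) • vT‖ ≤ BT := by
      rw [norm_smul, Real.norm_eq_abs]
      calc |Λ - (kΛ:ℝ)| * ‖vT‖ ≤ 1 * ‖vT‖ :=
            mul_le_mul_of_nonneg_right hfr1 (norm_nonneg _)
        _ = ‖vT‖ := one_mul _
        _ ≤ BT := by rw [hvT_def, hBT_def]; exact norm_sum_le _ _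
    have h2 : ‖∑ i, (μ i - ki i) • intCastEuc (tt x i)‖
        ≤ ∑ i : Fin (m x), ‖intCastEuc (tt x i)‖ := by
      calc ‖∑ i, (μ i - ki i) • intCastEuc (tt x i)‖
          ≤ ∑ i, ‖(μ i - ki i) • intCastEuc (tt x i)‖ := norm_sum_le _ _
        _ ≤ ∑ i : Fin (m x), ‖intCastEuc (tt x i)‖ := by
            refine Finset.sum_le_sum fun i _ => ?_
            rw [norm_smul, Real.norm_eq_abs]
            calc |μ i - (ki i:ℝ)| * ‖intCastEuc (tt x i)‖
                ≤ 1 * ‖intCastEuc (tt x i)‖ :=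
                  mul_le_mul_of_nonneg_right (hfr2 i) (norm_nonneg _)
              _ = _ := one_mul _
    have h3 : ∑ i : Fin (m x), ‖intCastEuc (tt x i)‖
        ≤ cov.sup' hcovne (fun x => ∑ i : Fin (m x), ‖intCastEuc (tt x i)‖) :=
      Finset.le_sup' (f := fun x => ∑ i : Fin (m x), ‖intCastEuc (tt x i)‖) hxcov
    calc ‖(Λ - kΛ) • vT + ∑ i, (μ i - ki i) • intCastEuc (tt x i)‖
        ≤ ‖(Λ - kΛ) • vT‖ + ‖∑ i, (μ i - ki i) • intCastEuc (tt x i)‖ := norm_add_le _ _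
      _ ≤ B := by rw [hB_def]; linarith
  have hr0RF : r0 ∈ RF := by
    rw [hRF_def, Set.Finite.mem_toFinset]
    exact ⟨hr0G, hr0norm⟩
  have hcfr := hcf r0 hr0RF
  have hcfbound : ∀ e ∈ T, (cf r0 e).natAbs ≤ M := by
    intro e he
    calc (cf r0 e).natAbs ≤ T.sup (fun e => (cf r0 e).natAbs) := Finset.le_sup (f := fun e => (cf r0 e).natAbs) he
      _ ≤ M := by rw [hM_def]; exact Finset.le_sup (f := fun h => T.sup fun e => (cf h e).natAbs) hr0RF
  have hcoef : ∀ e ∈ T, (1:ℤ) ≤ (kΛ:ℤ) + cf r0 e := by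
    intro e he
    have h1 := hcfbound e he
    have h2 : M + 2 ≤ kΛ := hkΛnat
    omega
  -- the final integral identity
  have heq2 : ∑ e ∈ T, ((kΛ:ℤ) + cf r0 e) • e + ∑ i, (ki i : ℤ) • tt x i = g := by
    simp only [add_smul, Finset.sum_add_distrib]
    rw [hcfr]
    have h1 : ∑ e ∈ T, (kΛ:ℤ) • e = (kΛ:ℤ) • ∑ e ∈ T, e := (Finset.smul_sum).symm
    rw [h1, hr0_def]
    simp only [natCast_zsmul]
    abel
  -- conclusion
  have hfinal := sum_mem_S hS (T.disjSum (Finset.univ : Finset (Fin (m x))))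
    (Sum.elim id (tt x))
    (Sum.elim (fun e => ((kΛ:ℤ) + cf r0 e).toNat) (fun i => ki i))
    (by
      rintro (e | i) hj
      · rw [Finset.inl_mem_disjSum] at hj
        exact hTS hj
      · exact httS i)
    (by
      obtain ⟨e0, he0⟩ := hTne
      refine ⟨Sum.inl e0, Finset.inl_mem_disjSum.2 he0, ?_⟩
      have := hcoef e0 he0
      simp only [Sum.elim_inl]
      omega)
  have hsum_eq : ∑ j ∈ T.disjSum (Finset.univ : Finset (Fin (m x))),
      (Sum.elim (fun e => ((kΛ:ℤ) + cf r0 e).toNat) (fun i => ki i)) j •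
        (Sum.elim id (tt x)) j = g := by
    rw [Finset.sum_disjSum]
    simp only [Sum.elim_inl, Sum.elim_inr, id_eq]
    have h1 : ∀ e ∈ T, ((kΛ:ℤ) + cf r0 e).toNat • e = ((kΛ:ℤ) + cf r0 e) • e := by
      intro e he
      rw [← natCast_zsmul, Int.toNat_of_nonneg (by linarith [hcoef e he])]
    rw [Finset.sum_congr rfl h1]
    have h2 : ∀ i : Fin (m x), ki i • tt x i = ((ki i : ℤ)) • tt x i :=
      fun i => (natCast_zsmul _ _).symm
    rw [Finset.sum_congr rfl (fun i _ => h2 i)]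
    exact heq2
  rw [hsum_eq] at hfinal
  exact hfinal
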